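/- arXiv:1911.13135 — 3 statements merged into one kernel-verified Lean document; each statement's English description precedes it below -/
import Mathlib

section
/- Let Ω be a measurable subset of ℝ^N (e.g. a ball or all of ℝ^N) and let d be a symmetric nonnegative function on pairs of probability measures on Ω such that for every probability measure ν, every pair of probability measures μ₀, μ₁, and every t ∈ [0,1], writing μ_t = (1−t)·μ₀ + t·μ₁ (mixture of measures), one has d(ν, μ_t)² = (1−t)·d(ν, μ₀)² + t·d(ν, μ₁)² − t(1−t)·d(μ₀, μ₁)². Then for any points x₁, …, x_K ∈ Ω and y₁, …, y_J ∈ Ω, d( (1/K)·Σ_{k=1}^K δ_{x_k}, (1/J)·Σ_{j=1}^J δ_{y_j} )² = (1/(K·J))·Σ_{k=1}^K Σ_{j=1}^J d(δ_{x_k}, δ_{y_j})² − (1/(2K²))·Σ_{k=1}^K Σ_{k'=1}^K d(δ_{x_k}, δ_{x_{k'}})² − (1/(2J²))·Σ_{j=1}^J Σ_{j'=1}^J d(δ_{y_j}, δ_{y_{j'}})². -/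
open MeasureTheory
open scoped ENNReal

variable {α : Type*} [MeasurableSpace α]

lemma prob_avg (n : ℕ) (hn : 0 < n) (μ : Fin n → Measure α)
    (hμ : ∀ i, IsProbabilityMeasure (μ i)) :
    IsProbabilityMeasure ((n : ℝ≥0∞)⁻¹ • ∑ i, μ i) := by
  constructor
  have h : ((∑ i, μ i : Measure α)) Set.univ = n := by simp [measure_univ]
  rw [Measure.smul_apply, h, smul_eq_mul, ENNReal.inv_mul_cancel]
  · exact_mod_cast hn.ne'
  · exact ENNReal.natCast_ne_top n

lemma d_self_zero (d : Measure α → Measure α → ℝ)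
    (hnonneg : ∀ μ ν : Measure α, 0 ≤ d μ ν)
    (hid : ∀ ν μ₀ μ₁ : Measure α, IsProbabilityMeasure ν → IsProbabilityMeasure μ₀ →
      IsProbabilityMeasure μ₁ → ∀ t ∈ Set.Icc (0 : ℝ) 1,
        d ν (ENNReal.ofReal (1 - t) • μ₀ + ENNReal.ofReal t • μ₁) ^ 2
          = (1 - t) * d ν μ₀ ^ 2 + t * d ν μ₁ ^ 2 - t * (1 - t) * d μ₀ μ₁ ^ 2)
    (μ : Measure α) (hμ : IsProbabilityMeasure μ) : d μ μ = 0 := by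
  have h := hid μ μ μ hμ hμ hμ (1/2) (by norm_num)
  have hm : (ENNReal.ofReal (1 - 1/2) • μ + ENNReal.ofReal (1/2) • μ) = μ := by
    rw [← add_smul, ← ENNReal.ofReal_add (by norm_num) (by norm_num)]
    norm_num
  rw [hm] at h
  have := hnonneg μ μ
  nlinarith

lemma measure_split (n : ℕ) (hn : 0 < n) (μ : Fin (n+1) → Measure α) :
    ((n+1 : ℕ) : ℝ≥0∞)⁻¹ • ∑ i, μ i
      = ENNReal.ofReal (1 - (((n:ℝ)+1))⁻¹) • ((n : ℝ≥0∞)⁻¹ • ∑ i : Fin n, μ i.castSucc)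
        + ENNReal.ofReal (((n:ℝ)+1)⁻¹) • μ (Fin.last n) := by
  have hn1 : ((n:ℝ)+1) = ((n+1 : ℕ) : ℝ) := by push_cast; ring
  have h1 : ENNReal.ofReal (((n:ℝ)+1)⁻¹) = ((n+1 : ℕ) : ℝ≥0∞)⁻¹ := by
    rw [ENNReal.ofReal_inv_of_pos (by positivity), hn1, ENNReal.ofReal_natCast]
  have h2 : ENNReal.ofReal (1 - ((n:ℝ)+1)⁻¹) = (n : ℝ≥0∞) * ((n+1 : ℕ) : ℝ≥0∞)⁻¹ := by
    have he : 1 - ((n:ℝ)+1)⁻¹ = (n:ℝ) * ((n:ℝ)+1)⁻¹ := by field_simp; ring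
    rw [he, ENNReal.ofReal_mul (by positivity), ENNReal.ofReal_natCast, h1]
  rw [h1, h2, smul_smul]
  have h3 : (n : ℝ≥0∞) * ((n+1 : ℕ) : ℝ≥0∞)⁻¹ * (n : ℝ≥0∞)⁻¹ = ((n+1 : ℕ) : ℝ≥0∞)⁻¹ := by
    rw [mul_comm (n : ℝ≥0∞), mul_assoc,
      ENNReal.mul_inv_cancel (by exact_mod_cast hn.ne') (ENNReal.natCast_ne_top n), mul_one]
  rw [h3, ← smul_add, Fin.sum_univ_castSucc]

lemma key (d : Measure α → Measure α → ℝ)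
    (hsymm : ∀ μ ν : Measure α, d μ ν = d ν μ)
    (hnonneg : ∀ μ ν : Measure α, 0 ≤ d μ ν)
    (hid : ∀ ν μ₀ μ₁ : Measure α, IsProbabilityMeasure ν → IsProbabilityMeasure μ₀ →
      IsProbabilityMeasure μ₁ → ∀ t ∈ Set.Icc (0 : ℝ) 1,
        d ν (ENNReal.ofReal (1 - t) • μ₀ + ENNReal.ofReal t • μ₁) ^ 2
          = (1 - t) * d ν μ₀ ^ 2 + t * d ν μ₁ ^ 2 - t * (1 - t) * d μ₀ μ₁ ^ 2) :
    ∀ n : ℕ, 0 < n → ∀ (μ : Fin n → Measure α), (∀ i, IsProbabilityMeasure (μ i)) →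
    ∀ ν : Measure α, IsProbabilityMeasure ν →
    d ν ((n : ℝ≥0∞)⁻¹ • ∑ i, μ i) ^ 2
      = (1/(n:ℝ)) * ∑ i, d ν (μ i) ^ 2
        - (1/(2*(n:ℝ)^2)) * ∑ i, ∑ j, d (μ i) (μ j) ^ 2 := by
  intro n hn
  induction n, hn using Nat.le_induction with
  | base =>
    intro μ hμ ν hν
    simp only [Fin.sum_univ_one, Nat.cast_one, inv_one, one_smul]
    rw [d_self_zero d hnonneg hid (μ 0) (hμ 0)]
    norm_num
  | succ n hn ih =>
    intro μ hμ ν hν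
    have hn' : (0:ℝ) < n := by exact_mod_cast hn
    set t : ℝ := ((n:ℝ)+1)⁻¹ with ht
    have htIcc : t ∈ Set.Icc (0:ℝ) 1 := by
      constructor
      · positivity
      · rw [ht, inv_le_one_iff₀]; right; linarith
    set Mn : Measure α := (n : ℝ≥0∞)⁻¹ • ∑ i : Fin n, μ i.castSucc with hMn
    have hMnprob : IsProbabilityMeasure Mn :=
      prob_avg n (by omega) _ (fun i => hμ _)
    have hsplit := measure_split n (by omega) μ
    rw [hsplit]
    rw [hid ν Mn (μ (Fin.last n)) hν hMnprob (hμ _) t htIcc]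
    rw [ih (fun i => μ i.castSucc) (fun i => hμ _) ν hν]
    rw [hsymm Mn (μ (Fin.last n)),
      ih (fun i => μ i.castSucc) (fun i => hμ _) (μ (Fin.last n)) (hμ _)]
    rw [Fin.sum_univ_castSucc (f := fun i => d ν (μ i) ^ 2)]
    rw [Fin.sum_univ_castSucc (f := fun i => ∑ j, d (μ i) (μ j) ^ 2)]
    have hinner : ∀ i : Fin (n+1), ∑ j, d (μ i) (μ j) ^ 2
        = (∑ j : Fin n, d (μ i) (μ j.castSucc) ^ 2) + d (μ i) (μ (Fin.last n)) ^ 2 :=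
      fun i => Fin.sum_univ_castSucc (f := fun j => d (μ i) (μ j) ^ 2)
    simp only [hinner]
    rw [d_self_zero d hnonneg hid (μ (Fin.last n)) (hμ _)]
    have hswap : ∑ i : Fin n, d (μ i.castSucc) (μ (Fin.last n)) ^ 2
        = ∑ i : Fin n, d (μ (Fin.last n)) (μ i.castSucc) ^ 2 := by
      apply Finset.sum_congr rfl; intro i _; rw [hsymm]
    rw [Finset.sum_add_distrib, hswap]
    set A := ∑ i : Fin n, d ν (μ i.castSucc) ^ 2
    set B := d ν (μ (Fin.last n)) ^ 2
    set D := ∑ i : Fin n, ∑ j : Fin n, d (μ i.castSucc) (μ j.castSucc) ^ 2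
    set T := ∑ i : Fin n, d (μ (Fin.last n)) (μ i.castSucc) ^ 2
    have hne : (n:ℝ) + 1 ≠ 0 := by positivity
    have hcast : ((n+1:ℕ):ℝ) = (n:ℝ)+1 := by push_cast; ring
    rw [hcast, ht]
    field_simp
    ring


/-- If a symmetric nonnegative function `d` on probability measures on a measurable set
`Ω ⊆ ℝ^N` satisfies the "nonlocal calculability" identity
`d(ν, (1−t)μ₀ + tμ₁)² = (1−t)d(ν,μ₀)² + t d(ν,μ₁)² − t(1−t)d(μ₀,μ₁)²`
along all straight-line segments of probability measures, then the distance between two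
empirical (uniform sum-of-Diracs) measures is given by the explicit double-sum formula. -/
theorem stmt2 {N : ℕ} (Ω : Set (EuclideanSpace ℝ (Fin N))) (hΩ : MeasurableSet Ω)
    (d : Measure Ω → Measure Ω → ℝ)
    (hsymm : ∀ μ ν : Measure Ω, d μ ν = d ν μ)
    (hnonneg : ∀ μ ν : Measure Ω, 0 ≤ d μ ν)
    (hid : ∀ ν μ₀ μ₁ : Measure Ω, IsProbabilityMeasure ν → IsProbabilityMeasure μ₀ →
      IsProbabilityMeasure μ₁ → ∀ t ∈ Set.Icc (0 : ℝ) 1,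
        d ν (ENNReal.ofReal (1 - t) • μ₀ + ENNReal.ofReal t • μ₁) ^ 2
          = (1 - t) * d ν μ₀ ^ 2 + t * d ν μ₁ ^ 2 - t * (1 - t) * d μ₀ μ₁ ^ 2)
    (K J : ℕ) (hK : 0 < K) (hJ : 0 < J)
    (x : Fin K → Ω) (y : Fin J → Ω) :
    d ((K : ℝ≥0∞)⁻¹ • ∑ k, Measure.dirac (x k))
        ((J : ℝ≥0∞)⁻¹ • ∑ j, Measure.dirac (y j)) ^ 2
      = (1 / (K * J : ℝ)) * ∑ k, ∑ j, d (Measure.dirac (x k)) (Measure.dirac (y j)) ^ 2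
        - (1 / (2 * (K : ℝ) ^ 2)) * ∑ k, ∑ k', d (Measure.dirac (x k)) (Measure.dirac (x k')) ^ 2
        - (1 / (2 * (J : ℝ) ^ 2)) * ∑ j, ∑ j', d (Measure.dirac (y j)) (Measure.dirac (y j')) ^ 2 := by
  have hPX : IsProbabilityMeasure ((K : ℝ≥0∞)⁻¹ • ∑ k, Measure.dirac (x k)) :=
    prob_avg K hK _ (fun k => inferInstance)
  rw [key d hsymm hnonneg hid J hJ (fun j => Measure.dirac (y j))
    (fun j => inferInstance) _ hPX]
  have hterm : ∀ j, d ((K : ℝ≥0∞)⁻¹ • ∑ k, Measure.dirac (x k)) (Measure.dirac (y j)) ^ 2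
      = (1/(K:ℝ)) * ∑ k, d (Measure.dirac (y j)) (Measure.dirac (x k)) ^ 2
        - (1/(2*(K:ℝ)^2)) * ∑ k, ∑ k', d (Measure.dirac (x k)) (Measure.dirac (x k')) ^ 2 := by
    intro j
    rw [hsymm, key d hsymm hnonneg hid K hK (fun k => Measure.dirac (x k))
      (fun k => inferInstance) _ inferInstance]
  simp only [hterm]
  have hcomm : ∑ j, ∑ k, d (Measure.dirac (y j)) (Measure.dirac (x k)) ^ 2
      = ∑ k, ∑ j, d (Measure.dirac (x k)) (Measure.dirac (y j)) ^ 2 := by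
    rw [Finset.sum_comm]
    exact Finset.sum_congr rfl fun k _ => Finset.sum_congr rfl fun j _ => by rw [hsymm]
  rw [Finset.sum_sub_distrib, ← Finset.mul_sum, hcomm, Finset.sum_const,
    Finset.card_univ, Fintype.card_fin, nsmul_eq_mul]
  have hK' : (0:ℝ) < K := by exact_mod_cast hK
  have hJ' : (0:ℝ) < J := by exact_mod_cast hJ
  field_simp
end

section
/- Let μ and ν be probability measures on ℝ^N each with finite first moment (∫‖x‖ dμ(x) < ∞ and ∫‖y‖ dν(y) < ∞). Then ∫∫ ‖x − y‖ dμ(x) dν(y) − (1/2) ∫∫ ‖x − x'‖ dμ(x) dμ(x') − (1/2) ∫∫ ‖y − y'‖ dν(y) dν(y') ≥ 0. -/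
open MeasureTheory ENNReal Set Function Metric

set_option maxHeartbeats 1000000

noncomputable section EnergyDistanceAux

namespace EnergyDistanceAux

/-! ### One-dimensional part -/

/-- the two-sided indicator kernel -/
def Fk (x y t : ℝ) : ℝ≥0∞ :=
  (if x < t then 1 else 0) * (if y < t then 0 else 1)
  + (if y < t then 1 else 0) * (if x < t then 0 else 1)

lemma measurable_Fk : Measurable (fun p : ℝ × ℝ × ℝ => Fk p.1 p.2.1 p.2.2) := by
  unfold Fk
  have h1 : MeasurableSet {p : ℝ × ℝ × ℝ | p.1 < p.2.2} :=
    measurableSet_lt measurable_fst measurable_snd.snd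
  have h2 : MeasurableSet {p : ℝ × ℝ × ℝ | p.2.1 < p.2.2} :=
    measurableSet_lt measurable_snd.fst measurable_snd.snd
  exact ((Measurable.ite h1 measurable_const measurable_const).mul
      (Measurable.ite h2 measurable_const measurable_const)).add
    ((Measurable.ite h2 measurable_const measurable_const).mul
      (Measurable.ite h1 measurable_const measurable_const))

lemma lint_lt (α : Measure ℝ) (t : ℝ) :
    ∫⁻ x, (if x < t then (1:ℝ≥0∞) else 0) ∂α = α (Iio t) := by
  have : (fun x => if x < t then (1:ℝ≥0∞) else 0)
      = (Iio t).indicator (fun _ => 1) := by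
    funext x; simp [Set.indicator_apply, Set.mem_Iio]
  rw [this, lintegral_indicator measurableSet_Iio, setLIntegral_one]

lemma lint_ge (α : Measure ℝ) (t : ℝ) :
    ∫⁻ x, (if x < t then (0:ℝ≥0∞) else 1) ∂α = α (Ici t) := by
  have : (fun x => if x < t then (0:ℝ≥0∞) else 1)
      = (Ici t).indicator (fun _ => 1) := by
    funext x
    by_cases h : x < t
    · simp [Set.indicator_apply, Set.mem_Ici, h, not_le.2 h]
    · simp [Set.indicator_apply, Set.mem_Ici, h, not_lt.1 h]
  rw [this, lintegral_indicator measurableSet_Ici, setLIntegral_one]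

lemma double_Fk (α β : Measure ℝ) [IsProbabilityMeasure α] [IsProbabilityMeasure β]
    (t : ℝ) :
    ∫⁻ x, ∫⁻ y, Fk x y t ∂β ∂α
      = α (Iio t) * β (Ici t) + β (Iio t) * α (Ici t) := by
  unfold Fk
  have hm1 : Measurable fun y : ℝ => (if y < t then (1:ℝ≥0∞) else 0) := by
    exact Measurable.ite (measurableSet_Iio) measurable_const measurable_const
  have hm2 : Measurable fun y : ℝ => (if y < t then (0:ℝ≥0∞) else 1) := by
    exact Measurable.ite (measurableSet_Iio) measurable_const measurable_const
  have inner : ∀ x : ℝ, ∫⁻ y, ((if x < t then 1 else 0) * (if y < t then 0 else 1)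
      + (if y < t then 1 else 0) * (if x < t then (0:ℝ≥0∞) else 1)) ∂β
      = (if x < t then 1 else 0) * β (Ici t)
        + β (Iio t) * (if x < t then (0:ℝ≥0∞) else 1) := by
    intro x
    rw [lintegral_add_left (hm2.const_mul _), lintegral_const_mul _ hm2,
      lintegral_mul_const _ hm1, lint_ge, lint_lt]
  simp_rw [inner]
  have hm3 : Measurable fun x : ℝ => (if x < t then (1:ℝ≥0∞) else 0) * β (Ici t) := by
    exact (Measurable.ite measurableSet_Iio measurable_const measurable_const).mul_const _
  rw [lintegral_add_left hm3, lintegral_mul_const _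
    (Measurable.ite measurableSet_Iio measurable_const measurable_const),
    lintegral_const_mul _ (Measurable.ite measurableSet_Iio measurable_const measurable_const),
    lint_lt, lint_ge]


lemma indicator_uIoc_eq (x y t : ℝ) :
    (Set.uIoc x y).indicator (fun _ => (1:ℝ≥0∞)) t = Fk x y t := by
  unfold Fk
  by_cases hx : x < t <;> by_cases hy : y < t <;>
    simp only [hx, hy, if_true, if_false, mul_one, mul_zero, one_mul, zero_mul,
      add_zero, zero_add]
  · refine Set.indicator_of_notMem (fun hmem => ?_) _
    rw [Set.mem_uIoc] at hmem
    rcases hmem with ⟨h1, h2⟩ | ⟨h1, h2⟩ <;> linarith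
  · exact Set.indicator_of_mem (Set.mem_uIoc.2 (Or.inl ⟨hx, not_lt.1 hy⟩)) _
  · exact Set.indicator_of_mem (Set.mem_uIoc.2 (Or.inr ⟨hy, not_lt.1 hx⟩)) _
  · refine Set.indicator_of_notMem (fun hmem => ?_) _
    rw [Set.mem_uIoc] at hmem
    rcases hmem with ⟨h1, h2⟩ | ⟨h1, h2⟩ <;> linarith

lemma ofReal_abs_eq_lintegral (x y : ℝ) :
    ENNReal.ofReal |x - y| = ∫⁻ t, (Set.uIoc x y).indicator (fun _ => (1:ℝ≥0∞)) t := by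
  rw [lintegral_indicator measurableSet_uIoc, setLIntegral_one, Set.uIoc,
    Real.volume_Ioc, max_sub_min_eq_abs, abs_sub_comm]


def L1 (α β : Measure ℝ) : ℝ≥0∞ := ∫⁻ x, ∫⁻ y, ENNReal.ofReal |x - y| ∂β ∂α

lemma L1_eq (α β : Measure ℝ) [IsProbabilityMeasure α] [IsProbabilityMeasure β] :
    L1 α β = ∫⁻ t, (α (Iio t) * β (Ici t) + β (Iio t) * α (Ici t)) := by
  have h1 : L1 α β = ∫⁻ x, ∫⁻ y, (∫⁻ t, Fk x y t) ∂β ∂α := by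
    unfold L1
    apply lintegral_congr; intro x
    apply lintegral_congr; intro y
    rw [ofReal_abs_eq_lintegral]
    exact lintegral_congr fun t => indicator_uIoc_eq x y t
  rw [h1]
  have swap1 : ∀ x : ℝ, ∫⁻ y, (∫⁻ t, Fk x y t) ∂β
      = ∫⁻ t, ∫⁻ y, Fk x y t ∂β := by
    intro x
    refine lintegral_lintegral_swap ?_
    exact (measurable_Fk.comp (measurable_const.prodMk
      (measurable_fst.prodMk measurable_snd))).aemeasurable
  simp_rw [swap1]
  have swap2 : ∫⁻ x, ∫⁻ t, (∫⁻ y, Fk x y t ∂β) ∂(volume) ∂α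
      = ∫⁻ t, ∫⁻ x, (∫⁻ y, Fk x y t ∂β) ∂α := by
    refine lintegral_lintegral_swap ?_
    refine Measurable.aemeasurable ?_
    have h : Measurable (uncurry fun (p : ℝ × ℝ) (y : ℝ) => Fk p.1 y p.2) := by
      show Measurable fun q : (ℝ × ℝ) × ℝ => Fk q.1.1 q.2 q.1.2
      exact measurable_Fk.comp ((measurable_fst.fst).prodMk
        (measurable_snd.prodMk measurable_fst.snd))
    exact h.lintegral_prod_right
  rw [swap2]
  exact lintegral_congr fun t => double_Fk α β t

theorem onedim (α β : Measure ℝ) [IsProbabilityMeasure α] [IsProbabilityMeasure β] :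
    L1 α α + L1 β β ≤ 2 * L1 α β := by
  have hmA : Measurable fun t => α (Iio t) := Monotone.measurable fun s t hst =>
    measure_mono (Iio_subset_Iio hst)
  have hmB : Measurable fun t => β (Iio t) := Monotone.measurable fun s t hst =>
    measure_mono (Iio_subset_Iio hst)
  have hmA' : Measurable fun t => α (Ici t) := Antitone.measurable fun s t hst =>
    measure_mono (Ici_subset_Ici.2 hst)
  have hmB' : Measurable fun t => β (Ici t) := Antitone.measurable fun s t hst =>
    measure_mono (Ici_subset_Ici.2 hst)
  rw [L1_eq α α, L1_eq β β, L1_eq α β, ← lintegral_add_left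
    (show Measurable fun t => α (Iio t) * α (Ici t) + α (Iio t) * α (Ici t) from
      ((hmA.mul hmA').add (hmA.mul hmA'))), ← lintegral_const_mul 2
    (show Measurable fun t => α (Iio t) * β (Ici t) + β (Iio t) * α (Ici t) from
      ((hmA.mul hmB').add (hmB.mul hmA')))]
  refine lintegral_mono fun t => ?_
  set a := α (Iio t); set a' := α (Ici t); set b := β (Iio t); set b' := β (Ici t)
  have ha : a + a' = 1 := by
    rw [← measure_union (by simp [Set.disjoint_left]) measurableSet_Ici,
      Iio_union_Ici, measure_univ]
  have hb : b + b' = 1 := by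
    rw [← measure_union (by simp [Set.disjoint_left]) measurableSet_Ici,
      Iio_union_Ici, measure_univ]
  have fa : a ≠ ⊤ := (lt_of_le_of_lt (le_trans (le_add_right le_rfl) ha.le) one_lt_top).ne
  have fa' : a' ≠ ⊤ := (lt_of_le_of_lt (le_trans (le_add_left le_rfl) ha.le) one_lt_top).ne
  have fb : b ≠ ⊤ := (lt_of_le_of_lt (le_trans (le_add_right le_rfl) hb.le) one_lt_top).ne
  have fb' : b' ≠ ⊤ := (lt_of_le_of_lt (le_trans (le_add_left le_rfl) hb.le) one_lt_top).ne
  lift a to NNReal using fa with A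
  lift a' to NNReal using fa' with A'
  lift b to NNReal using fb with B
  lift b' to NNReal using fb' with B'
  norm_cast at ha hb ⊢
  have haR : (A:ℝ) + A' = 1 := by exact_mod_cast congrArg NNReal.toReal ha
  have hbR : (B:ℝ) + B' = 1 := by exact_mod_cast congrArg NNReal.toReal hb
  rw [← NNReal.coe_le_coe]
  push_cast
  have hA' : (A':ℝ) = 1 - A := by linarith
  have hB' : (B':ℝ) = 1 - B := by linarith
  rw [hA', hB']
  nlinarith [sq_nonneg ((A:ℝ) - B)]


/-! ### Multi-dimensional part -/

variable {N : ℕ}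

local notation "E" => EuclideanSpace ℝ (Fin N)

def gam (N : ℕ) : Measure (EuclideanSpace ℝ (Fin N)) :=
  (volume : Measure (EuclideanSpace ℝ (Fin N))).restrict (ball 0 1)

def cfun (a : EuclideanSpace ℝ (Fin N)) : ℝ≥0∞ :=
  ∫⁻ g, ENNReal.ofReal |(inner ℝ a g : ℝ)| ∂(gam N)

lemma meas_inner_abs (a : E) :
    Measurable fun g : E => ENNReal.ofReal |(inner ℝ a g : ℝ)| := by
  exact ((continuous_const.inner continuous_id).abs.measurable).ennreal_ofReal

lemma gam_invariance (R : E ≃ₗᵢ[ℝ] E) {F : E → ℝ≥0∞} (hF : Measurable F) :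
    ∫⁻ g, F (R g) ∂(gam N) = ∫⁻ g, F g ∂(gam N) := by
  have hmp : MeasurePreserving R (volume : Measure E) volume :=
    R.measurePreserving
  have hpre : R ⁻¹' (ball 0 1) = ball (0 : E) 1 := by
    ext g
    simp [mem_ball, dist_eq_norm, R.norm_map]
  have h2 : MeasurePreserving R (gam N) (gam N) := by
    have := hmp.restrict_preimage (s := ball 0 1) measurableSet_ball
    rwa [hpre] at this
  exact h2.lintegral_comp hF

lemma cfun_isometry (R : E ≃ₗᵢ[ℝ] E) (a : E) : cfun (R a) = cfun a := by
  unfold cfun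
  rw [← gam_invariance R (meas_inner_abs (R a))]
  refine lintegral_congr fun g => ?_
  rw [R.inner_map_map]

lemma cfun_smul (r : ℝ) (a : E) : cfun (r • a) = ENNReal.ofReal |r| * cfun a := by
  unfold cfun
  rw [← lintegral_const_mul' _ _ ofReal_ne_top]
  refine lintegral_congr fun g => ?_
  rw [real_inner_smul_left, abs_mul, ENNReal.ofReal_mul (abs_nonneg r)]

lemma cfun_unit (u v : E) (hu : ‖u‖ = 1) (hv : ‖v‖ = 1) : cfun u = cfun v := by
  have : (Submodule.reflection (ℝ ∙ (v - u))ᗮ) v = u := Submodule.reflection_sub (hv.trans hu.symm)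
  rw [← this, cfun_isometry]

lemma cfun_eq (u : E) (hu : ‖u‖ = 1) (a : E) :
    cfun a = ENNReal.ofReal ‖a‖ * cfun u := by
  by_cases ha : a = 0
  · subst ha
    unfold cfun
    simp
  · have hna : ‖a‖ ≠ 0 := norm_ne_zero_iff.2 ha
    have hw : ‖(‖a‖⁻¹ • a : E)‖ = 1 := norm_smul_inv_norm ha
    have h1 : a = ‖a‖ • (‖a‖⁻¹ • a : E) := by
      rw [smul_smul, mul_inv_cancel₀ hna, one_smul]
    calc cfun a = cfun (‖a‖ • (‖a‖⁻¹ • a : E)) := by rw [← h1]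
      _ = ENNReal.ofReal |‖a‖| * cfun (‖a‖⁻¹ • a : E) := cfun_smul _ _
      _ = ENNReal.ofReal ‖a‖ * cfun u := by
          rw [abs_of_nonneg (norm_nonneg a), cfun_unit _ u hw hu]

lemma cfun_lt_top (u : E) (hu : ‖u‖ = 1) : cfun u < ⊤ := by
  have hbound : cfun u ≤ ∫⁻ _, 1 ∂(gam N) := by
    unfold cfun gam
    refine lintegral_mono_ae ?_
    filter_upwards [ae_restrict_mem measurableSet_ball] with g hg
    have h1 : |(inner ℝ u g : ℝ)| ≤ ‖u‖ * ‖g‖ := abs_real_inner_le_norm u g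
    have h2 : ‖g‖ < 1 := by simpa [mem_ball, dist_eq_norm] using hg
    have : |(inner ℝ u g : ℝ)| ≤ 1 := by nlinarith [abs_nonneg (inner ℝ u g : ℝ)]
    calc ENNReal.ofReal |(inner ℝ u g : ℝ)| ≤ ENNReal.ofReal 1 :=
          ENNReal.ofReal_le_ofReal this
      _ = 1 := ENNReal.ofReal_one
  refine lt_of_le_of_lt hbound ?_
  rw [lintegral_one]
  unfold gam
  rw [Measure.restrict_apply_univ]
  exact measure_ball_lt_top

lemma cfun_pos (u : E) (hu : ‖u‖ = 1) : 0 < cfun u := by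
  unfold cfun
  rw [lintegral_pos_iff_support (meas_inner_abs u)]
  have hsupp : support (fun g : E => ENNReal.ofReal |(inner ℝ u g : ℝ)|)
      = {g : E | (inner ℝ u g : ℝ) ≠ 0} := by
    ext g
    simp [support, abs_ne_zero, ENNReal.ofReal_eq_zero, not_le,
      abs_pos, lt_iff_le_and_ne]
  rw [hsupp]
  have hmeasset : MeasurableSet {g : E | (inner ℝ u g : ℝ) ≠ 0} :=
    ((continuous_const.inner continuous_id).measurable (measurableSet_singleton 0)).compl
  unfold gam
  rw [Measure.restrict_apply hmeasset]
  -- the complement set is a proper submodule, hence null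
  set H : Submodule ℝ E := (ℝ ∙ u)ᗮ with hH
  have hHset : {g : E | ¬ (inner ℝ u g : ℝ) ≠ 0} = (H : Set E) := by
    ext g
    simp [hH, Submodule.mem_orthogonal_singleton_iff_inner_right]
  have hHne : H ≠ ⊤ := by
    intro htop
    have : u ∈ H := htop ▸ Submodule.mem_top
    have := (Submodule.mem_orthogonal_singleton_iff_inner_right).1 this
    have hu0 : u = 0 := by
      have := inner_self_eq_zero.1 this
      exact this
    rw [hu0] at hu; simp at hu
  have hnull : (volume : Measure E) (H : Set E) = 0 :=
    Measure.addHaar_submodule _ H hHne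
  have hsub : ball (0:E) 1 ⊆ {g : E | (inner ℝ u g : ℝ) ≠ 0} ∩ ball 0 1 ∪ (H : Set E) := by
    intro g hg
    by_cases hc : (inner ℝ u g : ℝ) ≠ 0
    · exact Or.inl ⟨hc, hg⟩
    · right; rw [← hHset]; exact hc
  have hball : (0:ℝ≥0∞) < volume (ball (0:E) 1) := measure_ball_pos _ _ one_pos
  by_contra hzero
  push_neg at hzero
  rw [le_zero_iff] at hzero
  have : volume (ball (0:E) 1) ≤ 0 := by
    calc volume (ball (0:E) 1)
        ≤ volume ({g : E | (inner ℝ u g : ℝ) ≠ 0} ∩ ball 0 1) + volume (H : Set E) :=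
          le_trans (measure_mono hsub) (measure_union_le _ _)
      _ = 0 := by rw [hzero, hnull, add_zero]
  exact absurd (lt_of_lt_of_le hball this) (lt_irrefl 0)

def LL (μ ν : Measure (EuclideanSpace ℝ (Fin N))) : ℝ≥0∞ :=
  ∫⁻ x, ∫⁻ y, ENNReal.ofReal ‖x - y‖ ∂ν ∂μ

instance gam_sfinite : SFinite (gam N) := by unfold gam; infer_instance

lemma measurable_K :
    Measurable fun p : E × E × E =>
      ENNReal.ofReal |(inner ℝ (p.1 - p.2.1) p.2.2 : ℝ)| := by
  exact (((measurable_fst.sub measurable_snd.fst).inner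
    measurable_snd.snd).abs).ennreal_ofReal

lemma proj_measurable (g : E) : Measurable fun x : E => (inner ℝ x g : ℝ) :=
  (continuous_id.inner continuous_const).measurable

lemma L1_map_eq (μ ν : Measure (EuclideanSpace ℝ (Fin N)))
    [IsProbabilityMeasure μ] [IsProbabilityMeasure ν] (g : E) :
    L1 (μ.map fun x => (inner ℝ x g : ℝ)) (ν.map fun x => (inner ℝ x g : ℝ))
      = ∫⁻ x, ∫⁻ y, ENNReal.ofReal |(inner ℝ (x - y) g : ℝ)| ∂ν ∂μ := by
  have hφ : Measurable fun x : E => (inner ℝ x g : ℝ) := proj_measurable g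
  haveI : IsProbabilityMeasure (ν.map fun x => (inner ℝ x g : ℝ)) :=
    Measure.isProbabilityMeasure_map hφ.aemeasurable
  unfold L1
  have hG : Measurable fun a : ℝ =>
      ∫⁻ b, ENNReal.ofReal |a - b| ∂(ν.map fun x => (inner ℝ x g : ℝ)) := by
    have h : Measurable (uncurry fun (a : ℝ) (b : ℝ) => ENNReal.ofReal |a - b|) := by
      exact ((continuous_fst.sub continuous_snd).abs.measurable).ennreal_ofReal
    exact h.lintegral_prod_right
  rw [lintegral_map hG hφ]
  refine lintegral_congr fun x => ?_
  rw [lintegral_map (by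
    exact ((continuous_const.sub continuous_id).abs.measurable).ennreal_ofReal) hφ]
  refine lintegral_congr fun y => ?_
  rw [inner_sub_left]

lemma swap_helper {X Y : Type*} [MeasurableSpace X] [MeasurableSpace Y]
    (m1 : Measure X) (m2 : Measure Y) [SFinite m1] [SFinite m2]
    (f : X → Y → ℝ≥0∞) (hf : Measurable fun p : X × Y => f p.1 p.2) :
    ∫⁻ a, ∫⁻ b, f a b ∂m2 ∂m1 = ∫⁻ b, ∫⁻ a, f a b ∂m1 ∂m2 :=
  lintegral_lintegral_swap hf.aemeasurable

lemma key_identity (u : E) (hu : ‖u‖ = 1)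
    (μ ν : Measure (EuclideanSpace ℝ (Fin N)))
    [IsProbabilityMeasure μ] [IsProbabilityMeasure ν] :
    ∫⁻ g, (∫⁻ x, ∫⁻ y, ENNReal.ofReal |(inner ℝ (x - y) g : ℝ)| ∂ν ∂μ) ∂(gam N)
      = cfun u * LL μ ν := by
  have hm1 : Measurable fun q : (E × E) × E =>
      ENNReal.ofReal |(inner ℝ (q.1.2 - q.2) q.1.1 : ℝ)| :=
    (((measurable_fst.snd.sub measurable_snd).inner measurable_fst.fst).abs).ennreal_ofReal
  have hm2 : Measurable fun p : E × E =>
      ∫⁻ y, ENNReal.ofReal |(inner ℝ (p.2 - y) p.1 : ℝ)| ∂ν :=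
    Measurable.lintegral_prod_right (f := fun (p : E × E) (y : E) =>
      ENNReal.ofReal |(inner ℝ (p.2 - y) p.1 : ℝ)|) hm1
  have swap1 : ∫⁻ g, (∫⁻ x, (∫⁻ y, ENNReal.ofReal |(inner ℝ (x - y) g : ℝ)| ∂ν) ∂μ) ∂(gam N)
      = ∫⁻ x, (∫⁻ g, (∫⁻ y, ENNReal.ofReal |(inner ℝ (x - y) g : ℝ)| ∂ν) ∂(gam N)) ∂μ :=
    swap_helper (gam N) μ
      (fun g x => ∫⁻ y, ENNReal.ofReal |(inner ℝ (x - y) g : ℝ)| ∂ν) hm2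
  rw [swap1]
  have swap2 : ∀ x : E,
      ∫⁻ g, (∫⁻ y, ENNReal.ofReal |(inner ℝ (x - y) g : ℝ)| ∂ν) ∂(gam N)
      = ∫⁻ y, (∫⁻ g, ENNReal.ofReal |(inner ℝ (x - y) g : ℝ)| ∂(gam N)) ∂ν := by
    intro x
    exact swap_helper (gam N) ν
      (fun g y => ENNReal.ofReal |(inner ℝ (x - y) g : ℝ)|)
      ((((measurable_const.sub measurable_snd).inner measurable_fst).abs).ennreal_ofReal)
  simp_rw [swap2]
  have inner_eq : ∀ x y : E,
      ∫⁻ g, ENNReal.ofReal |(inner ℝ (x - y) g : ℝ)| ∂(gam N)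
        = ENNReal.ofReal ‖x - y‖ * cfun u := by
    intro x y
    exact cfun_eq u hu (x - y)
  simp_rw [inner_eq]
  unfold LL
  rw [mul_comm (cfun u) _, ← lintegral_mul_const' (cfun u) _ (cfun_lt_top u hu).ne]
  refine lintegral_congr fun x => ?_
  rw [← lintegral_mul_const' (cfun u) _ (cfun_lt_top u hu).ne]


lemma measurable_double (μ ν : Measure (EuclideanSpace ℝ (Fin N))) [SFinite μ] [SFinite ν] :
    Measurable fun g : E =>
      ∫⁻ x, ∫⁻ y, ENNReal.ofReal |(inner ℝ (x - y) g : ℝ)| ∂ν ∂μ := by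
  have hm1 : Measurable fun q : (E × E) × E =>
      ENNReal.ofReal |(inner ℝ (q.1.2 - q.2) q.1.1 : ℝ)| :=
    (((measurable_fst.snd.sub measurable_snd).inner measurable_fst.fst).abs).ennreal_ofReal
  have hm2 : Measurable fun p : E × E =>
      ∫⁻ y, ENNReal.ofReal |(inner ℝ (p.2 - y) p.1 : ℝ)| ∂ν :=
    Measurable.lintegral_prod_right (f := fun (p : E × E) (y : E) =>
      ENNReal.ofReal |(inner ℝ (p.2 - y) p.1 : ℝ)|) hm1
  exact Measurable.lintegral_prod_right (f := fun (g x : E) =>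
    ∫⁻ y, ENNReal.ofReal |(inner ℝ (x - y) g : ℝ)| ∂ν) hm2

lemma main_ennreal (u : E) (hu : ‖u‖ = 1)
    (μ ν : Measure (EuclideanSpace ℝ (Fin N)))
    [IsProbabilityMeasure μ] [IsProbabilityMeasure ν] :
    LL μ μ + LL ν ν ≤ 2 * LL μ ν := by
  have hpt : ∀ g : E,
      (∫⁻ x, ∫⁻ y, ENNReal.ofReal |(inner ℝ (x - y) g : ℝ)| ∂μ ∂μ)
        + (∫⁻ x, ∫⁻ y, ENNReal.ofReal |(inner ℝ (x - y) g : ℝ)| ∂ν ∂ν)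
      ≤ 2 * (∫⁻ x, ∫⁻ y, ENNReal.ofReal |(inner ℝ (x - y) g : ℝ)| ∂ν ∂μ) := by
    intro g
    have hφ := proj_measurable (N := N) g
    haveI : IsProbabilityMeasure (μ.map fun x => (inner ℝ x g : ℝ)) :=
      Measure.isProbabilityMeasure_map hφ.aemeasurable
    haveI : IsProbabilityMeasure (ν.map fun x => (inner ℝ x g : ℝ)) :=
      Measure.isProbabilityMeasure_map hφ.aemeasurable
    have h := onedim (μ.map fun x => (inner ℝ x g : ℝ)) (ν.map fun x => (inner ℝ x g : ℝ))
    rwa [L1_map_eq μ μ g, L1_map_eq ν ν g, L1_map_eq μ ν g] at h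
  have hInt := lintegral_mono (μ := gam N) hpt
  rw [lintegral_add_left (measurable_double μ μ),
    lintegral_const_mul 2 (measurable_double μ ν),
    key_identity u hu μ μ, key_identity u hu ν ν, key_identity u hu μ ν] at hInt
  have hInt2 : cfun u * (LL μ μ + LL ν ν) ≤ cfun u * (2 * LL μ ν) := by
    rw [mul_add]
    calc cfun u * LL μ μ + cfun u * LL ν ν ≤ 2 * (cfun u * LL μ ν) := hInt
      _ = cfun u * (2 * LL μ ν) := by ring
  exact (ENNReal.mul_le_mul_iff_right (cfun_pos u hu).ne' (cfun_lt_top u hu).ne).1 hInt2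

lemma lint_norm_lt_top {ρ : Measure (EuclideanSpace ℝ (Fin N))}
    (hρ : Integrable (fun x => ‖x‖) ρ) :
    ∫⁻ x, ENNReal.ofReal ‖x‖ ∂ρ < ⊤ := by
  have h := hρ.hasFiniteIntegral
  rw [HasFiniteIntegral] at h
  refine lt_of_le_of_lt (le_of_eq ?_) h
  refine lintegral_congr fun x => ?_
  rw [← ofReal_norm_eq_enorm]
  simp [Real.norm_eq_abs, abs_of_nonneg (norm_nonneg x)]

lemma LL_lt_top (μ ν : Measure (EuclideanSpace ℝ (Fin N)))
    [IsProbabilityMeasure μ] [IsProbabilityMeasure ν]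
    (hμ : Integrable (fun x => ‖x‖) μ) (hν : Integrable (fun y => ‖y‖) ν) :
    LL μ ν < ⊤ := by
  have Kν := lint_norm_lt_top hν
  have Kμ := lint_norm_lt_top hμ
  have step : LL μ ν ≤ (∫⁻ x, ENNReal.ofReal ‖x‖ ∂μ) + ∫⁻ y, ENNReal.ofReal ‖y‖ ∂ν := by
    unfold LL
    calc ∫⁻ x, ∫⁻ y, ENNReal.ofReal ‖x - y‖ ∂ν ∂μ
        ≤ ∫⁻ x, (ENNReal.ofReal ‖x‖ + ∫⁻ y, ENNReal.ofReal ‖y‖ ∂ν) ∂μ := by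
          refine lintegral_mono fun x => ?_
          calc ∫⁻ y, ENNReal.ofReal ‖x - y‖ ∂ν
              ≤ ∫⁻ y, (ENNReal.ofReal ‖x‖ + ENNReal.ofReal ‖y‖) ∂ν := by
                refine lintegral_mono fun y => ?_
                rw [← ENNReal.ofReal_add (norm_nonneg _) (norm_nonneg _)]
                exact ENNReal.ofReal_le_ofReal (norm_sub_le x y)
            _ = ENNReal.ofReal ‖x‖ + ∫⁻ y, ENNReal.ofReal ‖y‖ ∂ν := by
                rw [lintegral_add_left measurable_const, lintegral_const,
                  measure_univ, mul_one]
      _ = (∫⁻ x, ENNReal.ofReal ‖x‖ ∂μ) + ∫⁻ y, ENNReal.ofReal ‖y‖ ∂ν := by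
          rw [lintegral_add_right _ measurable_const, lintegral_const,
            measure_univ, mul_one]
  exact lt_of_le_of_lt step (ENNReal.add_lt_top.2 ⟨Kμ, Kν⟩)

lemma bochner_eq (μ ν : Measure (EuclideanSpace ℝ (Fin N)))
    [IsProbabilityMeasure μ] [IsProbabilityMeasure ν]
    (hν : Integrable (fun y => ‖y‖) ν) :
    (∫ x, ∫ y, ‖x - y‖ ∂ν ∂μ) = (LL μ ν).toReal := by
  have hfin : ∀ x : E, ∫⁻ y, ENNReal.ofReal ‖x - y‖ ∂ν ≠ ⊤ := by
    intro x
    have Kν := lint_norm_lt_top hν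
    have step : ∫⁻ y, ENNReal.ofReal ‖x - y‖ ∂ν
        ≤ ENNReal.ofReal ‖x‖ + ∫⁻ y, ENNReal.ofReal ‖y‖ ∂ν := by
      calc ∫⁻ y, ENNReal.ofReal ‖x - y‖ ∂ν
          ≤ ∫⁻ y, (ENNReal.ofReal ‖x‖ + ENNReal.ofReal ‖y‖) ∂ν := by
            refine lintegral_mono fun y => ?_
            rw [← ENNReal.ofReal_add (norm_nonneg _) (norm_nonneg _)]
            exact ENNReal.ofReal_le_ofReal (norm_sub_le x y)
        _ = ENNReal.ofReal ‖x‖ + ∫⁻ y, ENNReal.ofReal ‖y‖ ∂ν := by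
            rw [lintegral_add_left measurable_const, lintegral_const,
              measure_univ, mul_one]
    exact (lt_of_le_of_lt step (ENNReal.add_lt_top.2 ⟨ENNReal.ofReal_lt_top, Kν⟩)).ne
  have hinner : ∀ x : E, ∫ y, ‖x - y‖ ∂ν = (∫⁻ y, ENNReal.ofReal ‖x - y‖ ∂ν).toReal := by
    intro x
    have hsm : AEStronglyMeasurable (fun y : E => ‖x - y‖) ν :=
      ((continuous_const.sub continuous_id).norm).aestronglyMeasurable
    rw [integral_eq_lintegral_of_nonneg_ae
      (Filter.Eventually.of_forall fun y => norm_nonneg _) hsm]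
  simp_rw [hinner]
  have hmeas : Measurable fun x : E => ∫⁻ y, ENNReal.ofReal ‖x - y‖ ∂ν :=
    Measurable.lintegral_prod_right (f := fun (x y : E) => ENNReal.ofReal ‖x - y‖)
      ((measurable_fst.sub measurable_snd).norm.ennreal_ofReal)
  rw [integral_eq_lintegral_of_nonneg_ae
    (Filter.Eventually.of_forall fun x => ENNReal.toReal_nonneg)
    hmeas.ennreal_toReal.aestronglyMeasurable]
  unfold LL
  congr 1
  exact lintegral_congr fun x => ENNReal.ofReal_toReal (hfin x)


end EnergyDistanceAux

end EnergyDistanceAux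

open EnergyDistanceAux

/-- Nonnegativity of the (squared) energy distance: for probability measures `μ, ν` on `ℝ^N`
with finite first moments,
`∫∫‖x−y‖ dμ dν − (1/2)∫∫‖x−x'‖ dμ dμ − (1/2)∫∫‖y−y'‖ dν dν ≥ 0`. -/
theorem stmt4 {N : ℕ} (μ ν : Measure (EuclideanSpace ℝ (Fin N)))
    [IsProbabilityMeasure μ] [IsProbabilityMeasure ν]
    (hμ : Integrable (fun x => ‖x‖) μ) (hν : Integrable (fun y => ‖y‖) ν) :
    0 ≤ (∫ x, ∫ y, ‖x - y‖ ∂ν ∂μ)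
        - (1 / 2) * (∫ x, ∫ x', ‖x - x'‖ ∂μ ∂μ)
        - (1 / 2) * (∫ y, ∫ y', ‖y - y'‖ ∂ν ∂ν) := by
  rcases Nat.eq_zero_or_pos N with hN | hN
  · subst hN
    have hz : ∀ x y : EuclideanSpace ℝ (Fin 0), ‖x - y‖ = 0 := by
      intro x y
      have : x = y := Subsingleton.elim x y
      simp [this]
    simp only [hz, integral_zero]
    norm_num
  · haveI : NeZero N := ⟨hN.ne'⟩
    set u : EuclideanSpace ℝ (Fin N) := EuclideanSpace.single (0 : Fin N) (1:ℝ) with hu_def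
    have hu : ‖u‖ = 1 := by simp [hu_def, EuclideanSpace.norm_single]
    have main := main_ennreal u hu μ ν
    have fμν := LL_lt_top μ ν hμ hν
    have fμμ := LL_lt_top μ μ hμ hμ
    have fνν := LL_lt_top ν ν hν hν
    have hne : (2 : ℝ≥0∞) * LL μ ν ≠ ⊤ := ENNReal.mul_ne_top (by norm_num) fμν.ne
    have hreal := ENNReal.toReal_mono hne main
    rw [ENNReal.toReal_add fμμ.ne fνν.ne, ENNReal.toReal_mul, ENNReal.toReal_ofNat] at hreal
    rw [bochner_eq μ ν hν, bochner_eq μ μ hμ, bochner_eq ν ν hν]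
    linarith
end

section
/- For every real s > 1/2, the function a ↦ ∫_ℝ (2 − 2·cos(a·ξ)) · (1 + ξ²)^{−s} dξ tends to 2·√π · Γ(s − 1/2) / Γ(s) as a → +∞. -/
open MeasureTheory Filter

section Aux

open Set Real FourierTransform

private lemma stmt15_intW {s : ℝ} (hs : 1 / 2 < s) :
    Integrable (fun x : ℝ => (1 + x ^ 2) ^ (-s)) := by
  have h := integrable_rpow_neg_one_add_norm_sq (E := ℝ) (μ := volume) (r := 2 * s)
    (by rw [Module.finrank_self]; push_cast; linarith)
  simpa [Real.norm_eq_abs, sq_abs, neg_div, mul_div_assoc] using h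

private lemma stmt15_subst {s : ℝ} :
    ∫ t in Ioo (0:ℝ) 1, t ^ (s - 3/2) * (1 - t) ^ (-(1/2) : ℝ)
      = ∫ x in Ioi (0:ℝ), 2 * (1 + x ^ 2) ^ (-s) := by
  have himg : (fun x : ℝ => (1 + x ^ 2)⁻¹) '' Ioi 0 = Ioo 0 1 := by
    ext t
    constructor
    · rintro ⟨x, hx, rfl⟩
      have hx' : (0:ℝ) < x := hx
      constructor
      · positivity
      · rw [inv_lt_one_iff₀]; right; nlinarith
    · rintro ⟨ht0, ht1⟩
      refine ⟨Real.sqrt (t⁻¹ - 1), ?_, ?_⟩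
      · have : (1:ℝ) < t⁻¹ := (one_lt_inv_iff₀).2 ⟨ht0, ht1⟩
        exact Real.sqrt_pos.2 (by linarith)
      · have h1 : (1:ℝ) < t⁻¹ := (one_lt_inv_iff₀).2 ⟨ht0, ht1⟩
        show (1 + Real.sqrt (t⁻¹ - 1) ^ 2)⁻¹ = t
        rw [Real.sq_sqrt (by linarith)]
        field_simp
        ring
  have hderiv : ∀ x ∈ Ioi (0:ℝ), HasDerivWithinAt (fun x : ℝ => (1 + x ^ 2)⁻¹)
      (-(2 * x) / (1 + x ^ 2) ^ 2) (Ioi 0) x := by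
    intro x _
    have h1 : HasDerivAt (fun x : ℝ => 1 + x ^ 2) (2 * x) x := by
      simpa using ((hasDerivAt_pow 2 x).const_add 1)
    exact (h1.inv (by positivity)).hasDerivWithinAt
  have hinj : InjOn (fun x : ℝ => (1 + x ^ 2)⁻¹) (Ioi 0) := by
    intro x hx y hy h
    simp only at h
    have hx' : (0:ℝ) < x := hx
    have hy' : (0:ℝ) < y := hy
    have : 1 + x ^ 2 = 1 + y ^ 2 := by
      have := congrArg (·⁻¹) h
      simpa [inv_inv] using this
    nlinarith
  have := integral_image_eq_integral_abs_deriv_smul measurableSet_Ioi hderiv hinj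
    (fun t => t ^ (s - 3/2) * (1 - t) ^ (-(1/2) : ℝ))
  rw [himg] at this
  rw [this]
  apply setIntegral_congr_fun measurableSet_Ioi
  intro x hx
  have hx' : (0:ℝ) < x := hx
  have hA : (0:ℝ) < 1 + x ^ 2 := by positivity
  have e2 : 1 - (1 + x ^ 2)⁻¹ = x ^ 2 / (1 + x ^ 2) := by field_simp; ring
  simp only [smul_eq_mul, e2]
  rw [abs_div, abs_neg, abs_of_nonneg (by positivity : (0:ℝ) ≤ 2 * x),
    abs_of_nonneg (by positivity : (0:ℝ) ≤ (1 + x ^ 2) ^ 2)]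
  rw [Real.div_rpow (by positivity) hA.le]
  have ex : ((x ^ 2 : ℝ)) ^ (-(1/2):ℝ) = x⁻¹ := by
    rw [← Real.rpow_natCast x 2, ← Real.rpow_mul hx'.le]
    norm_num [Real.rpow_neg_one]
  rw [ex, ← Real.rpow_neg_one (1 + x ^ 2), ← Real.rpow_mul hA.le,
    ← Real.rpow_natCast ((1:ℝ) + x ^ 2) 2]
  simp only [div_eq_mul_inv, ← Real.rpow_neg hA.le, mul_inv_cancel₀ hx'.ne']
  have gen : ∀ p q r : ℝ, p + q + r = -s →
      (1 + x ^ 2) ^ p * ((1 + x ^ 2) ^ q * (1 + x ^ 2) ^ r) = (1 + x ^ 2) ^ (-s) := by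
    intro p q r h
    rw [← Real.rpow_add hA, ← Real.rpow_add hA]; congr 1; linarith
  rw [← gen (-((2:ℕ):ℝ)) (-1 * (s - 3 * 2⁻¹)) (- -(1 * 2⁻¹)) (by push_cast; ring)]
  field_simp

private lemma stmt15_betaR {s : ℝ} (hs : 1 / 2 < s) :
    Real.Gamma (s - 1/2) * Real.sqrt π =
      Real.Gamma s * ∫ x in (0:ℝ)..1, x ^ (s - 3/2) * (1 - x) ^ (-(1/2) : ℝ) := by
  have hu : (0:ℝ) < s - 1/2 := by linarith
  have hb := Complex.Gamma_mul_Gamma_eq_betaIntegral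
    (s := ((s - 1/2 : ℝ) : ℂ)) (t := ((1/2 : ℝ) : ℂ))
    (by simpa using hu) (by norm_num)
  have hB : Complex.betaIntegral ((s - 1/2 : ℝ) : ℂ) ((1/2 : ℝ) : ℂ)
      = ((∫ x in (0:ℝ)..1, x ^ (s - 3/2) * (1 - x) ^ (-(1/2) : ℝ) : ℝ) : ℂ) := by
    rw [Complex.betaIntegral, ← intervalIntegral.integral_ofReal]
    apply intervalIntegral.integral_congr
    intro x hx
    rw [uIcc_of_le (by norm_num : (0:ℝ) ≤ 1)] at hx
    obtain ⟨hx0, hx1⟩ := hx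
    push_cast
    rw [Complex.ofReal_cpow hx0, Complex.ofReal_cpow (by linarith)]
    push_cast
    have e1 : ((s:ℂ) - 3/2) = (s - 1/2 : ℂ) - 1 := by ring
    have e2 : (-(1/2) : ℂ) = (1/2 : ℂ) - 1 := by ring
    rw [e1, e2]
  rw [hB] at hb
  have hsum : ((s - 1/2 : ℝ) : ℂ) + ((1/2 : ℝ) : ℂ) = ((s : ℝ) : ℂ) := by push_cast; ring
  rw [hsum, Complex.Gamma_ofReal, Complex.Gamma_ofReal, Complex.Gamma_ofReal] at hb
  rw [← Complex.ofReal_mul, ← Complex.ofReal_mul] at hb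
  have hreal := Complex.ofReal_injective hb
  rw [← Real.Gamma_one_half_eq]
  exact hreal

private lemma stmt15_valueW {s : ℝ} (hs : 1 / 2 < s) :
    ∫ x : ℝ, (1 + x ^ 2) ^ (-s) = Real.sqrt π * Real.Gamma (s - 1/2) / Real.Gamma s := by
  have hΓ : 0 < Real.Gamma s := Real.Gamma_pos_of_pos (by linarith)
  have h1 : ∫ x : ℝ, (1 + x ^ 2) ^ (-s) = 2 * ∫ x in Ioi (0:ℝ), (1 + x ^ 2) ^ (-s) := by
    rw [← integral_comp_abs (f := fun x : ℝ => (1 + x ^ 2) ^ (-s))]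
    simp [sq_abs]
  have h2 : (∫ x in (0:ℝ)..1, x ^ (s - 3/2) * (1 - x) ^ (-(1/2) : ℝ))
      = 2 * ∫ x in Ioi (0:ℝ), (1 + x ^ 2) ^ (-s) := by
    rw [intervalIntegral.integral_of_le (by norm_num : (0:ℝ) ≤ 1),
      integral_Ioc_eq_integral_Ioo, stmt15_subst, MeasureTheory.integral_const_mul]
  have h3 := stmt15_betaR hs
  rw [h2] at h3
  rw [h1, eq_div_iff hΓ.ne']
  linarith [h3]

private lemma stmt15_rl {s : ℝ}
    (hint : Integrable (fun x : ℝ => (1 + x ^ 2) ^ (-s))) :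
    Tendsto (fun a : ℝ => ∫ x : ℝ, Real.cos (a * x) * (1 + x ^ 2) ^ (-s))
      atTop (nhds 0) := by
  set F : ℝ → ℂ := fun x => ((1 + x ^ 2) ^ (-s) : ℝ) with hF
  have hFi : Integrable F := hint.ofReal
  have h0 := Real.tendsto_integral_exp_smul_cocompact F
  have hmap : Tendsto (fun a : ℝ => a / (2 * π)) atTop (cocompact ℝ) :=
    (tendsto_id.atTop_div_const (by positivity)).mono_right
      (by rw [cocompact_eq_atBot_atTop]; exact le_sup_right)
  have h1 := h0.comp hmap
  have h2 : Tendsto (fun a : ℝ =>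
      (∫ v : ℝ, 𝐞 (-(v * (a / (2 * π)))) • F v).re) atTop (nhds 0) := by
    exact (Complex.continuous_re.tendsto 0).comp h1
  refine h2.congr fun a => ?_
  have hI : Integrable (fun v : ℝ => 𝐞 (-(v * (a / (2 * π)))) • F v) := by
    have := (Real.fourierIntegral_convergent_iff (f := F) (w := a / (2 * π))).2 hFi
    simpa [mul_comm] using this
  have hre := integral_re hI
  simp only [RCLike.re_to_complex] at hre
  rw [← hre]
  apply integral_congr_ae
  filter_upwards with v
  rw [Circle.smul_def, Real.fourierChar_apply]
  have hpi : (2 * π * -(v * (a / (2 * π)))) = -(a * v) := by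
    field_simp
  rw [hpi]
  have : (Complex.exp (↑(-(a * v)) * Complex.I)).re = Real.cos (-(a * v)) :=
    Complex.exp_ofReal_mul_I_re _
  push_cast at this
  simp only [Complex.mul_re, hF]
  rw [show -(↑a * ↑v) * Complex.I = -(Complex.I * (↑a * ↑v)) by ring] at this
  simp [this, Real.cos_neg, mul_comm]

end Aux

/-- For every real `s > 1/2`, `∫_ℝ (2 − 2cos(aξ))·(1 + ξ²)^{−s} dξ → 2√π·Γ(s − 1/2)/Γ(s)`
as `a → +∞`. -/
theorem stmt15 (s : ℝ) (hs : 1 / 2 < s) :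
    Tendsto (fun a : ℝ => ∫ x : ℝ, (2 - 2 * Real.cos (a * x)) * (1 + x ^ 2) ^ (-s))
      atTop (nhds (2 * Real.sqrt Real.pi * Real.Gamma (s - 1 / 2) / Real.Gamma s)) := by
  have hint := stmt15_intW hs
  have hval := stmt15_valueW hs
  have hcos : ∀ a : ℝ, Integrable (fun x : ℝ => Real.cos (a * x) * (1 + x ^ 2) ^ (-s)) := by
    intro a
    refine hint.mono' ?_ ?_
    · apply Continuous.aestronglyMeasurable
      exact (Real.continuous_cos.comp (continuous_const.mul continuous_id)).mul
        ((continuous_const.add (continuous_pow 2)).rpow_const fun x => Or.inl (ne_of_gt (by positivity : (0:ℝ) < 1 + x ^ 2)))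
    · filter_upwards with x
      have h1 : (0:ℝ) ≤ (1 + x ^ 2) ^ (-s) := Real.rpow_nonneg (by positivity) _
      rw [Real.norm_eq_abs, abs_mul, abs_of_nonneg h1]
      calc |Real.cos (a * x)| * (1 + x ^ 2) ^ (-s)
          ≤ 1 * (1 + x ^ 2) ^ (-s) := by
            gcongr
            exact Real.abs_cos_le_one _
        _ = (1 + x ^ 2) ^ (-s) := one_mul _
  have hT := (tendsto_const_nhds
      (x := 2 * ∫ x : ℝ, (1 + x ^ 2) ^ (-s)) (f := atTop (α := ℝ))).sub
    ((stmt15_rl hint).const_mul 2)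
  have hcongr : (fun a : ℝ => 2 * (∫ x : ℝ, (1 + x ^ 2) ^ (-s))
      - 2 * ∫ x : ℝ, Real.cos (a * x) * (1 + x ^ 2) ^ (-s))
      = fun a : ℝ => ∫ x : ℝ, (2 - 2 * Real.cos (a * x)) * (1 + x ^ 2) ^ (-s) := by
    funext a
    rw [← MeasureTheory.integral_const_mul, ← MeasureTheory.integral_const_mul,
      ← integral_sub (hint.const_mul 2) ((hcos a).const_mul 2)]
    congr 1
    funext x
    ring
  rw [hcongr] at hT
  have : 2 * (∫ x : ℝ, (1 + x ^ 2) ^ (-s)) - 2 * 0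
      = 2 * Real.sqrt Real.pi * Real.Gamma (s - 1 / 2) / Real.Gamma s := by
    rw [hval]
    ring
  rwa [this] at hT
end
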